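/- Let A be a complex unital Banach algebra and let K, K′ ∈ A satisfy the commutation relation K K′ − K′ K = i·(K − K′). Then for every real number t, exp((2π t i)·K) · exp((−2π t i)·K′) = exp((i·(e^{2π t} − 1))·(K − K′)), where e^{2π t} denotes the real exponential of 2πt. -/

import Mathlib

open NormedSpace

section aux
variable {A : Type*} [NormedRing A] [NormedAlgebra ℂ A] [CompleteSpace A]

lemma my_exp_semiconj {x y z : A} (h : y * x = x * z) : exp y * x = x * exp z := by
  have hp : ∀ n : ℕ, y ^ n * x = x * z ^ n := by
    intro n
    induction n with
    | zero => simp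
    | succ n ih => rw [pow_succ, mul_assoc, h, ← mul_assoc, ih, mul_assoc, ← pow_succ]
  rw [exp_eq_tsum ℂ]
  beta_reduce
  rw [← (expSeries_summable' (𝕂 := ℂ) y).tsum_mul_right x,
    ← (expSeries_summable' (𝕂 := ℂ) z).tsum_mul_left x]
  exact tsum_congr fun n => by rw [smul_mul_assoc, hp n, mul_smul_comm]

lemma my_exp_scalar (c : ℂ) : exp (c • (1 : A)) = Complex.exp c • (1 : A) := by
  rw [← Algebra.algebraMap_eq_smul_one, ← algebraMap_exp_comm, ← Complex.exp_eq_exp_ℂ,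
    Algebra.algebraMap_eq_smul_one]

lemma my_exp_add {x y : A} (h : Commute x y) : exp (x + y) = exp x * exp y :=
  exp_add_of_commute_of_mem_ball (𝕂 := ℂ) h
    ((expSeries_radius_eq_top ℂ A).symm ▸ edist_lt_top _ _)
    ((expSeries_radius_eq_top ℂ A).symm ▸ edist_lt_top _ _)

lemma my_key (K K' : A) (hcomm : K * K' - K' * K = Complex.I • (K - K')) (b : ℂ) :
    exp (b • K') * (K - K') =
      Complex.exp (-(b * Complex.I)) • ((K - K') * exp (b • K')) := by
  set L := K - K' with hL
  have h1 : K' * L - L * K' = -(Complex.I • L) := by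
    rw [← hcomm, hL, mul_sub, sub_mul]; abel
  have h0 : K' * L = L * K' - Complex.I • L := by
    rw [← neg_neg (Complex.I • L), ← h1]; abel
  have h : (b • K') * L = L * (b • K' + (-(b * Complex.I)) • (1 : A)) := by
    rw [smul_mul_assoc, h0, smul_sub, smul_smul, mul_add, mul_smul_comm, mul_smul_comm,
      mul_one, neg_smul, ← sub_eq_add_neg]
  have := my_exp_semiconj h
  rw [this]
  have hcom : Commute (b • K') ((-(b * Complex.I)) • (1 : A)) :=
    (Commute.one_right (b • K')).smul_right _
  rw [my_exp_add hcom, my_exp_scalar, mul_smul_comm, mul_one, mul_smul_comm]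

end aux


theorem stmt_8
    {A : Type*} [NormedRing A] [NormedAlgebra ℂ A] [CompleteSpace A]
    (K K' : A)
    (hcomm : K * K' - K' * K = Complex.I • (K - K')) :
    ∀ t : ℝ,
      exp ((((2 * Real.pi * t : ℝ) : ℂ) * Complex.I) • K) *
          exp ((-((2 * Real.pi * t : ℝ) : ℂ) * Complex.I) • K') =
        exp ((Complex.I * (((Real.exp (2 * Real.pi * t) : ℝ) : ℂ) - 1)) • (K - K')) := by
  set L := K - K' with hL
  set Φ : ℝ → A := fun t =>
    exp ((((2 * Real.pi * t : ℝ) : ℂ) * Complex.I) • K) *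
      exp ((-((2 * Real.pi * t : ℝ) : ℂ) * Complex.I) • K') *
      exp ((-(Complex.I * (((Real.exp (2 * Real.pi * t) : ℝ) : ℂ) - 1))) • L) with hΦdef
  have hΦ : ∀ t : ℝ, HasDerivAt Φ 0 t := by
    intro t
    set s : ℝ := Real.exp (2 * Real.pi * t) with hs
    set E1 := exp ((((2 * Real.pi * t : ℝ) : ℂ) * Complex.I) • K) with hE1
    set E2 := exp ((-((2 * Real.pi * t : ℝ) : ℂ) * Complex.I) • K') with hE2
    set E3 := exp ((-(Complex.I * ((s : ℂ) - 1))) • L) with hE3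
    -- derivative of the inner real function
    have hlin : HasDerivAt (fun t : ℝ => 2 * Real.pi * t) (2 * Real.pi) t := by
      simpa using (hasDerivAt_id t).const_mul (2 * Real.pi)
    have hφ1 : HasDerivAt (fun t : ℝ => (((2 * Real.pi * t : ℝ) : ℂ) * Complex.I))
        (((2 * Real.pi : ℝ) : ℂ) * Complex.I) t := hlin.ofReal_comp.mul_const _
    have hφ2 : HasDerivAt (fun t : ℝ => (-((2 * Real.pi * t : ℝ) : ℂ) * Complex.I))
        (-((2 * Real.pi : ℝ) : ℂ) * Complex.I) t := hlin.ofReal_comp.neg.mul_const _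
    have hre : HasDerivAt (fun t : ℝ => Real.exp (2 * Real.pi * t))
        (Real.exp (2 * Real.pi * t) * (2 * Real.pi)) t :=
      (Real.hasDerivAt_exp _).comp t hlin
    have hφ3 : HasDerivAt
        (fun t : ℝ => (-(Complex.I * (((Real.exp (2 * Real.pi * t) : ℝ) : ℂ) - 1))))
        (-(Complex.I * ((s * (2 * Real.pi) : ℝ) : ℂ))) t :=
      (((hre.ofReal_comp).sub_const 1).const_mul Complex.I).neg
    have h1 : HasDerivAt (fun t : ℝ => exp ((((2 * Real.pi * t : ℝ) : ℂ) * Complex.I) • K))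
        ((((2 * Real.pi : ℝ) : ℂ) * Complex.I) • (K * E1)) t :=
      (hasDerivAt_exp_smul_const' K _).scomp t hφ1
    have h2 : HasDerivAt (fun t : ℝ => exp ((-((2 * Real.pi * t : ℝ) : ℂ) * Complex.I) • K'))
        ((-((2 * Real.pi : ℝ) : ℂ) * Complex.I) • (E2 * K')) t :=
      (hasDerivAt_exp_smul_const K' _).scomp t hφ2
    have h3 : HasDerivAt
        (fun t : ℝ => exp ((-(Complex.I * (((Real.exp (2 * Real.pi * t) : ℝ) : ℂ) - 1))) • L))
        ((-(Complex.I * ((s * (2 * Real.pi) : ℝ) : ℂ))) • (E3 * L)) t :=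
      (hasDerivAt_exp_smul_const L _).scomp t hφ3
    have hD := (h1.mul h2).mul h3
    have hzero :
        (((((2 * Real.pi : ℝ) : ℂ) * Complex.I) • (K * E1)) * E2 +
              E1 * ((-((2 * Real.pi : ℝ) : ℂ) * Complex.I) • (E2 * K'))) * E3 +
            E1 * E2 * ((-(Complex.I * ((s * (2 * Real.pi) : ℝ) : ℂ))) • (E3 * L)) = 0 := by
      have fa : K * E1 = E1 * K := (((Commute.refl K).smul_right _).exp_right).eq
      have fb : K' * E2 = E2 * K' := (((Commute.refl K').smul_right _).exp_right).eq
      have fc : L * E3 = E3 * L := (((Commute.refl L).smul_right _).exp_right).eq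
      have fd : L * E2 = ((s : ℝ) : ℂ) • (E2 * L) := by
        have h := my_key K K' hcomm (-((2 * Real.pi * t : ℝ) : ℂ) * Complex.I)
        rw [← hL, ← hE2] at h
        have harg : -(-((2 * Real.pi * t : ℝ) : ℂ) * Complex.I * Complex.I)
            = -((2 * Real.pi * t : ℝ) : ℂ) := by
          rw [mul_assoc, Complex.I_mul_I]; ring
        rw [harg] at h
        have := congrArg (fun x => Complex.exp ((2 * Real.pi * t : ℝ) : ℂ) • x) h
        simp only [smul_smul, ← Complex.exp_add, add_neg_cancel, Complex.exp_zero,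
          one_smul] at this
        rw [← this, ← Complex.ofReal_exp, ← hs]
      have hKE2 : K * E2 = E2 * K' + ((s : ℝ) : ℂ) • (E2 * L) := by
        have hK : K' + L = K := by rw [hL]; exact add_sub_cancel K' K
        rw [← hK, add_mul, fb, fd]
      have hK2 : ∀ x : A, K * (E2 * x) = E2 * (K' * x) + ((s : ℝ) : ℂ) • (E2 * (L * x)) := by
        intro x
        rw [← mul_assoc, hKE2, add_mul, smul_mul_assoc, mul_assoc, mul_assoc]
      have fa' : ∀ x : A, K * (E1 * x) = E1 * (K * x) := fun x => by
        rw [← mul_assoc, fa, mul_assoc]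
      simp only [smul_mul_assoc, mul_smul_comm, mul_assoc]
      rw [fa', hKE2, ← fc]
      simp only [mul_add, add_mul, smul_add, smul_mul_assoc, mul_smul_comm, mul_assoc]
      push_cast
      module
    rw [← hzero]
    exact hD
  have hconst : ∀ t : ℝ, Φ t = Φ 0 := fun t =>
    is_const_of_deriv_eq_zero (fun u => (hΦ u).differentiableAt)
      (fun u => (hΦ u).deriv) t 0
  have hΦ0 : Φ 0 = 1 := by
    simp [hΦdef, exp_zero]
  intro t
  set v : A := (Complex.I * (((Real.exp (2 * Real.pi * t) : ℝ) : ℂ) - 1)) • L with hv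
  have hEv : exp (-v) * exp v = 1 := by
    rw [← my_exp_add ((Commute.refl v).neg_left), neg_add_cancel, exp_zero]
  have hΦt : Φ t = 1 := (hconst t).trans hΦ0
  have : Φ t * exp v = exp v := by rw [hΦt, one_mul]
  rw [hΦdef] at this
  simp only [neg_smul] at this
  rw [mul_assoc, hEv, mul_one] at this
  exact this
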